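/- arXiv:1910.12165 — 2 statements merged into one kernel-verified Lean document; each statement's English description precedes it below -/
import Mathlib

section
/- Let L : ℝⁿ → ℝ be C¹ with ∇L M-Lipschitz (Euclidean norm). Then |sup_{‖α‖_∞ ≤ ε} L(x+α) − (L(x) + ε‖∇L(x)‖₁)| ≤ (M·n/2)·ε². -/
lemma quad_helper (f f' : ℝ → ℝ) (K : ℝ) (hf : ∀ t, HasDerivAt f (f' t) t)
    (hb : ∀ t ∈ Set.Icc (0:ℝ) 1, |f' t - f' 0| ≤ K * t) :
    |f 1 - f 0 - f' 0| ≤ K / 2 := by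
  have hd : ∀ (c : ℝ) t, HasDerivAt (fun t => f t - t * f' 0 + c * t ^ 2 / 2)
      (f' t - f' 0 + c * t) t := by
    intro c t
    have h1 : HasDerivAt (fun t : ℝ => t * f' 0) (f' 0) t := by
      simpa using (hasDerivAt_id t).mul_const (f' 0)
    have h2 : HasDerivAt (fun t : ℝ => c * t ^ 2 / 2) (c * t) t := by
      have := ((hasDerivAt_pow 2 t).const_mul c).div_const 2
      refine this.congr_deriv ?_
      ring
    exact ((hf t).sub h1).add h2
  have hcont : ∀ c : ℝ, ContinuousOn (fun t => f t - t * f' 0 + c * t ^ 2 / 2) (Set.Icc 0 1) :=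
    fun c => Continuous.continuousOn
      (continuous_iff_continuousAt.2 fun t => (hd c t).differentiableAt.continuousAt)
  have hup : f 1 - f' 0 - K / 2 ≤ f 0 := by
    have hanti : AntitoneOn (fun t => f t - t * f' 0 + (-K) * t ^ 2 / 2) (Set.Icc 0 1) := by
      apply antitoneOn_of_deriv_nonpos (convex_Icc 0 1) (hcont (-K))
      · intro t _
        exact (hd (-K) t).differentiableAt.differentiableWithinAt
      · intro t ht
        rw [interior_Icc] at ht
        rw [(hd (-K) t).deriv]
        have := (abs_le.1 (hb t ⟨ht.1.le, ht.2.le⟩)).2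
        linarith
    have := hanti (Set.left_mem_Icc.2 zero_le_one) (Set.right_mem_Icc.2 zero_le_one) zero_le_one
    simp only [one_pow, mul_one, zero_pow, mul_zero, zero_mul] at this
    linarith
  have hlow : f 0 ≤ f 1 - f' 0 + K / 2 := by
    have hmono : MonotoneOn (fun t => f t - t * f' 0 + K * t ^ 2 / 2) (Set.Icc 0 1) := by
      apply monotoneOn_of_deriv_nonneg (convex_Icc 0 1) (hcont K)
      · intro t _
        exact (hd K t).differentiableAt.differentiableWithinAt
      · intro t ht
        rw [interior_Icc] at ht
        rw [(hd K t).deriv]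
        have := (abs_le.1 (hb t ⟨ht.1.le, ht.2.le⟩)).1
        linarith
    have := hmono (Set.left_mem_Icc.2 zero_le_one) (Set.right_mem_Icc.2 zero_le_one) zero_le_one
    simp only [one_pow, mul_one, zero_pow, mul_zero, zero_mul] at this
    linarith
  rw [abs_le]
  constructor <;> linarith

open scoped RealInnerProductSpace

lemma taylor_bound {n : ℕ} (L : EuclideanSpace ℝ (Fin n) → ℝ)
    (hL : ContDiff ℝ 1 L) (M : ℝ)
    (hLip : ∀ u v : EuclideanSpace ℝ (Fin n),
      ‖gradient L u - gradient L v‖ ≤ M * ‖u - v‖)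
    (x α : EuclideanSpace ℝ (Fin n)) :
    |L (x + α) - L x - ⟪gradient L x, α⟫| ≤ M * ‖α‖ ^ 2 / 2 := by
  have hdiff : ∀ u, DifferentiableAt ℝ L u := fun u => (hL.differentiable one_ne_zero) u
  set f : ℝ → ℝ := fun t => L (x + t • α) with hf
  set f' : ℝ → ℝ := fun t => ⟪gradient L (x + t • α), α⟫ with hf'
  have hder : ∀ t, HasDerivAt f (f' t) t := by
    intro t
    have hline : HasDerivAt (fun t : ℝ => x + t • α) α t := by
      simpa using ((hasDerivAt_id t).smul_const α).const_add x
    have hgrad := (hdiff (x + t • α)).hasGradientAt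
    have := hgrad.hasFDerivAt.comp_hasDerivAt t hline
    simpa [f, f', InnerProductSpace.toDual_apply_apply, Function.comp_def] using this
  have hb : ∀ t ∈ Set.Icc (0:ℝ) 1, |f' t - f' 0| ≤ (M * ‖α‖ ^ 2) * t := by
    intro t ht
    have : f' t - f' 0 = ⟪gradient L (x + t • α) - gradient L (x + (0:ℝ) • α), α⟫ := by
      simp [f', inner_sub_left]
    rw [this]
    calc |⟪gradient L (x + t • α) - gradient L (x + (0:ℝ) • α), α⟫|
        ≤ ‖gradient L (x + t • α) - gradient L (x + (0:ℝ) • α)‖ * ‖α‖ :=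
          abs_real_inner_le_norm _ _
      _ ≤ (M * ‖(x + t • α) - (x + (0:ℝ) • α)‖) * ‖α‖ := by
          gcongr; exact hLip _ _
      _ = (M * ‖α‖ ^ 2) * t := by
          simp [norm_smul, Real.norm_eq_abs, abs_of_nonneg ht.1]
          ring
  have := quad_helper f f' (M * ‖α‖ ^ 2) hder hb
  simpa [f, f'] using this

/-- with `∇L` `M`-Lipschitz (Euclidean norm), the worst-case loss over the
`ℓ^∞` ball of radius `ε` equals `L x + ε ‖∇L x‖₁` up to `(M n / 2) ε²`. -/
theorem adv_training_first_order (n : ℕ) (L : EuclideanSpace ℝ (Fin n) → ℝ)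
    (hL : ContDiff ℝ 1 L) (M : ℝ) (hM : 0 ≤ M)
    (hLip : ∀ u v : EuclideanSpace ℝ (Fin n),
      ‖gradient L u - gradient L v‖ ≤ M * ‖u - v‖)
    (x : EuclideanSpace ℝ (Fin n)) (ε : ℝ) (hε : 0 ≤ ε) :
    |sSup ((fun α : EuclideanSpace ℝ (Fin n) => L (x + α)) '' {α | ∀ i, |α i| ≤ ε})
        - (L x + ε * ∑ i, |gradient L x i|)| ≤ M * n / 2 * ε ^ 2 := by
  set g := gradient L x with hg
  set S : Set (EuclideanSpace ℝ (Fin n)) := {α | ∀ i, |α i| ≤ ε} with hS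
  have inner_eq : ∀ β α : EuclideanSpace ℝ (Fin n), ⟪β, α⟫ = ∑ i, β i * α i := by
    intro β α
    simp [PiLp.inner_apply, RCLike.inner_apply, conj_trivial]
    exact Finset.sum_congr rfl fun i _ => mul_comm _ _
  have hnormsq : ∀ α ∈ S, ‖α‖ ^ 2 ≤ n * ε ^ 2 := by
    intro α hα
    rw [← real_inner_self_eq_norm_sq, inner_eq α α]
    calc ∑ i, α i * α i ≤ ∑ _i : Fin n, ε ^ 2 := by
          apply Finset.sum_le_sum
          intro i _
          have := hα i
          nlinarith [abs_nonneg (α i), neg_abs_le (α i), le_abs_self (α i)]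
      _ = n * ε ^ 2 := by simp [Finset.sum_const]
  have htaylor : ∀ α ∈ S, |L (x + α) - L x - ⟪g, α⟫| ≤ M * n / 2 * ε ^ 2 := by
    intro α hα
    refine (taylor_bound L hL M hLip x α).trans ?_
    have := hnormsq α hα
    nlinarith [sq_nonneg ‖α‖]
  have hlin : ∀ α ∈ S, ⟪g, α⟫ ≤ ε * ∑ i, |g i| := by
    intro α hα
    rw [inner_eq g _, Finset.mul_sum]
    apply Finset.sum_le_sum
    intro i _
    calc g i * α i ≤ |g i * α i| := le_abs_self _
      _ = |g i| * |α i| := abs_mul _ _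
      _ ≤ |g i| * ε := by gcongr; exact hα i
      _ = ε * |g i| := mul_comm _ _
  set αs : EuclideanSpace ℝ (Fin n) := WithLp.toLp 2 (fun i => ε * Real.sign (g i)) with hαs
  have hαsS : αs ∈ S := by
    intro i
    show |ε * Real.sign (g i)| ≤ ε
    rcases lt_trichotomy (g i) 0 with h | h | h
    · simp [Real.sign_of_neg h, abs_of_nonneg hε]
    · simp [h, Real.sign_zero, hε]
    · simp [Real.sign_of_pos h, abs_of_nonneg hε]
  have hαs_inner : ⟪g, αs⟫ = ε * ∑ i, |g i| := by
    rw [inner_eq g _, Finset.mul_sum]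
    apply Finset.sum_congr rfl
    intro i _
    show g i * (ε * Real.sign (g i)) = ε * |g i|
    rcases lt_trichotomy (g i) 0 with h | h | h
    · rw [Real.sign_of_neg h, abs_of_neg h]; ring
    · simp [h]
    · rw [Real.sign_of_pos h, abs_of_pos h]; ring
  set T := (fun α : EuclideanSpace ℝ (Fin n) => L (x + α)) '' S with hT
  have hTne : T.Nonempty := ⟨L (x + 0), 0, fun i => by simpa using hε, rfl⟩
  have hbdd : ∀ y ∈ T, y ≤ L x + ε * ∑ i, |g i| + M * n / 2 * ε ^ 2 := by
    rintro y ⟨α, hα, rfl⟩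
    have h1 := (abs_le.1 (htaylor α hα)).2
    have h2 := hlin α hα
    simp only
    linarith
  have hle : sSup T ≤ L x + ε * ∑ i, |g i| + M * n / 2 * ε ^ 2 := csSup_le hTne hbdd
  have hge : L x + ε * ∑ i, |g i| - M * n / 2 * ε ^ 2 ≤ sSup T := by
    have hmem : L (x + αs) ∈ T := ⟨αs, hαsS, rfl⟩
    have h1 := (abs_le.1 (htaylor αs hαsS)).1
    have := le_csSup ⟨_, hbdd⟩ hmem
    rw [hαs_inner] at h1
    linarith
  rw [abs_le]
  constructor <;> linarith
end

section
/- Suppose L : ℝⁿ → ℝ is C¹, L(x) < c, and ε·γ(x,ε) < c − L(x), where γ(x,ε) = sup_{x' ∈ B_∞(x,ε)} ‖∇L(x')‖₁. Then L(x') < c for all x' ∈ B_∞(x,ε). -/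
lemma opNorm_le_l1 (n : ℕ) (f : (Fin n → ℝ) →L[ℝ] ℝ) :
    ‖f‖ ≤ ∑ i, |f (Pi.single i 1)| := by
  apply ContinuousLinearMap.opNorm_le_bound
  · positivity
  · intro v
    have hv : v = ∑ i, v i • (Pi.single i (1 : ℝ) : Fin n → ℝ) := by
      ext j; simp [Finset.sum_apply, Pi.single_apply]
    calc ‖f v‖ = |∑ i, v i * f (Pi.single i 1)| := by
          rw [show f v = ∑ i, v i * f (Pi.single i 1) by
            conv_lhs => rw [hv]
            simp [map_sum, smul_eq_mul]]
          rfl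
      _ ≤ ∑ i, |v i * f (Pi.single i 1)| := Finset.abs_sum_le_sum_abs _ _
      _ ≤ ∑ i, ‖v‖ * |f (Pi.single i 1)| := by
          apply Finset.sum_le_sum
          intro i _
          rw [abs_mul]
          exact mul_le_mul_of_nonneg_right (norm_le_pi_norm v i) (abs_nonneg _)
      _ = (∑ i, |f (Pi.single i 1)|) * ‖v‖ := by rw [← Finset.mul_sum, mul_comm]

/-- defense guarantee: if `L x < c` and `ε · γ(x,ε) < c - L x`, where
`γ(x,ε) = sup_{x' ∈ B_∞(x,ε)} ‖∇L(x')‖₁`, then `L x' < c` on all of `B_∞(x,ε)`. -/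
theorem defense_guarantee (n : ℕ) (L : (Fin n → ℝ) → ℝ) (hL : ContDiff ℝ 1 L)
    (x : Fin n → ℝ) (ε c : ℝ) (hε : 0 ≤ ε) (hx : L x < c)
    (h : ε * sSup ((fun x' => ∑ i, |fderiv ℝ L x' (Pi.single i 1)|) ''
        Metric.closedBall x ε) < c - L x) :
    ∀ x' ∈ Metric.closedBall x ε, L x' < c := by
  intro x' hx'
  set g : (Fin n → ℝ) → ℝ := fun x' => ∑ i, |fderiv ℝ L x' (Pi.single i 1)| with hg
  set γ : ℝ := sSup (g '' Metric.closedBall x ε) with hγ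
  have hgcont : Continuous g := by
    have := (hL.continuous_fderiv one_ne_zero)
    continuity
  have hcompact : IsCompact (g '' Metric.closedBall x ε) :=
    (isCompact_closedBall x ε).image hgcont
  have hne : (g '' Metric.closedBall x ε).Nonempty :=
    ⟨g x, Set.mem_image_of_mem _ (Metric.mem_closedBall_self hε)⟩
  have hbdd : BddAbove (g '' Metric.closedBall x ε) := hcompact.bddAbove
  have hγle : ∀ z ∈ Metric.closedBall x ε, ‖fderiv ℝ L z‖ ≤ γ := by
    intro z hz
    exact (opNorm_le_l1 n _).trans (le_csSup hbdd (Set.mem_image_of_mem _ hz))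
  have hdiff : ∀ z ∈ Metric.closedBall x ε, DifferentiableAt ℝ L z :=
    fun z _ => hL.differentiable one_ne_zero z
  have key : ‖L x' - L x‖ ≤ γ * ‖x' - x‖ :=
    Convex.norm_image_sub_le_of_norm_fderiv_le hdiff hγle
      (convex_closedBall x ε) (Metric.mem_closedBall_self hε) hx'
  have hγ0 : 0 ≤ γ := by
    obtain ⟨y, w, hw, rfl⟩ := hne
    refine le_trans ?_ (le_csSup hbdd ⟨w, hw, rfl⟩)
    positivity
  have h1 : L x' - L x ≤ γ * ε := by
    calc L x' - L x ≤ ‖L x' - L x‖ := le_abs_self _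
      _ ≤ γ * ‖x' - x‖ := key
      _ ≤ γ * ε := mul_le_mul_of_nonneg_left
          (mem_closedBall_iff_norm.mp hx') hγ0
  linarith [h, mul_comm ε γ ▸ h]
end
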